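/- arXiv:2604.02562 — 2 statements merged into one kernel-verified Lean document; each statement's English description precedes it below -/
import Mathlib

section
/- Let m ≥ 3 and let λ_1,…,λ_m ∈ ℤ² be arbitrary. Then for all α, β ∈ ℤ and all t ∈ K, the vector α·a + β·b + φ(t) belongs to L_i for every i = 1,…,m; i.e., ℤ⟨a⟩ + ℤ⟨b⟩ + φ(K) ⊆ L_1 ∩ ⋯ ∩ L_m. -/
namespace ToricStmt

/-- Cyclic successor on `Fin m` (indices mod `m`). -/
def fsucc {m : ℕ} (i : Fin m) : Fin m := ⟨(i.val + 1) % m, Nat.mod_lt _ i.pos⟩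

/-- The submodule `K` of linear relations among the `λ_i = (a_i, b_i)`. -/
def Kmod (m : ℕ) (a b : Fin m → ℤ) : Submodule ℤ (Fin m → ℤ) where
  carrier := {t | ∑ i, t i * a i = 0 ∧ ∑ i, t i * b i = 0}
  add_mem' := by
    intro x y hx hy
    obtain ⟨hx1, hx2⟩ := hx
    obtain ⟨hy1, hy2⟩ := hy
    constructor
    · simp only [Pi.add_apply, add_mul]
      rw [Finset.sum_add_distrib, hx1, hy1, add_zero]
    · simp only [Pi.add_apply, add_mul]
      rw [Finset.sum_add_distrib, hx2, hy2, add_zero]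
  zero_mem' := by constructor <;> simp
  smul_mem' := by
    intro c x hx
    obtain ⟨hx1, hx2⟩ := hx
    constructor
    · simp only [Pi.smul_apply, smul_eq_mul, mul_assoc]
      rw [← Finset.mul_sum, hx1, mul_zero]
    · simp only [Pi.smul_apply, smul_eq_mul, mul_assoc]
      rw [← Finset.mul_sum, hx2, mul_zero]

/-- The linear map `φ : ℤ^m → ℤ^m`, with `(φ t)_i = ∑_{j<i} (a_j b_i - a_i b_j) t_j`. -/
def phi (m : ℕ) (a b : Fin m → ℤ) : (Fin m → ℤ) →ₗ[ℤ] (Fin m → ℤ) where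
  toFun t := fun i => ∑ j ∈ Finset.univ.filter (fun j => j < i), (a j * b i - a i * b j) * t j
  map_add' x y := by
    funext i
    simp only [Pi.add_apply, mul_add]
    exact Finset.sum_add_distrib
  map_smul' c x := by
    funext i
    simp only [Pi.smul_apply, smul_eq_mul, RingHom.id_apply]
    rw [Finset.mul_sum]
    exact Finset.sum_congr rfl fun j _ => by ring

/-- The lattice `L_i`: the span of the `e_j` for `j ∉ {i, i+1}` together with
`a_i e_i + a_{i+1} e_{i+1}` and `b_i e_i + b_{i+1} e_{i+1}` (indices mod `m`). -/
def Lmod (m : ℕ) (a b : Fin m → ℤ) (i : Fin m) : Submodule ℤ (Fin m → ℤ) :=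
  Submodule.span ℤ
    ((fun j : Fin m => (Pi.single j 1 : Fin m → ℤ)) '' {j : Fin m | j ≠ i ∧ j ≠ fsucc i} ∪
      {a i • (Pi.single i 1 : Fin m → ℤ) + a (fsucc i) • (Pi.single (fsucc i) 1 : Fin m → ℤ),
       b i • (Pi.single i 1 : Fin m → ℤ) + b (fsucc i) • (Pi.single (fsucc i) 1 : Fin m → ℤ)})



lemma fsucc_ne {m : ℕ} (hm : 3 ≤ m) (i : Fin m) : i ≠ fsucc i := by
  intro h
  have hval : i.val = (i.val + 1) % m := congrArg Fin.val h
  have hi := i.isLt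
  rcases Nat.lt_or_ge (i.val + 1) m with h' | h'
  · rw [Nat.mod_eq_of_lt h'] at hval; omega
  · have : i.val + 1 = m := by omega
    rw [this, Nat.mod_self] at hval; omega

lemma mem_Lmod_of {m : ℕ} (hm : 3 ≤ m) (a b : Fin m → ℤ) (i : Fin m)
    (v : Fin m → ℤ) (x y : ℤ)
    (hi : v i = x * a i + y * b i)
    (hsi : v (fsucc i) = x * a (fsucc i) + y * b (fsucc i)) :
    v ∈ Lmod m a b i := by
  have hne := fsucc_ne hm i
  set ga := a i • (Pi.single i 1 : Fin m → ℤ) + a (fsucc i) • Pi.single (fsucc i) 1 with hga_def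
  set gb := b i • (Pi.single i 1 : Fin m → ℤ) + b (fsucc i) • Pi.single (fsucc i) 1 with hgb_def
  have hga : ga ∈ Lmod m a b i :=
    Submodule.subset_span (Or.inr (Set.mem_insert _ _))
  have hgb : gb ∈ Lmod m a b i :=
    Submodule.subset_span (Or.inr (Set.mem_insert_of_mem _ rfl))
  have hu : ∀ w : Fin m → ℤ, w i = 0 → w (fsucc i) = 0 → w ∈ Lmod m a b i := by
    intro w h1 h2
    have hw : w = ∑ j, w j • (Pi.single j 1 : Fin m → ℤ) := by
      funext k
      simp [Finset.sum_apply, Pi.single_apply]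
    rw [hw]
    refine Submodule.sum_mem _ fun j _ => ?_
    by_cases hji : j = i
    · subst hji; rw [h1]; simp
    by_cases hjs : j = fsucc i
    · subst hjs; rw [h2]; simp
    · exact Submodule.smul_mem _ _
        (Submodule.subset_span (Or.inl ⟨j, ⟨hji, hjs⟩, rfl⟩))
  have hgai : ga i = a i := by
    simp [hga_def, Pi.single_apply, hne]
  have hgas : ga (fsucc i) = a (fsucc i) := by
    simp [hga_def, Pi.single_apply, hne, Ne.symm hne]
  have hgbi : gb i = b i := by
    simp [hgb_def, Pi.single_apply, hne]
  have hgbs : gb (fsucc i) = b (fsucc i) := by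
    simp [hgb_def, Pi.single_apply, hne, Ne.symm hne]
  have hrest : v - x • ga - y • gb ∈ Lmod m a b i := by
    refine hu _ ?_ ?_
    · simp [hgai, hgbi, hi]
    · simp [hgas, hgbs, hsi]
  have := Submodule.add_mem _ hrest
    (Submodule.add_mem _ (Submodule.smul_mem _ x hga) (Submodule.smul_mem _ y hgb))
  have heq : v - x • ga - y • gb + (x • ga + y • gb) = v := by abel
  rwa [heq] at this

/-- For all `α, β ∈ ℤ` and `t ∈ K`, the vector `α • a + β • b + φ(t)`
belongs to `L_i` for every `i`. -/
theorem stmt3 (m : ℕ) (hm : 3 ≤ m) (a b : Fin m → ℤ) :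
    ∀ (α β : ℤ), ∀ t ∈ Kmod m a b, ∀ i : Fin m,
      α • a + β • b + phi m a b t ∈ Lmod m a b i := by
  intro α β t ht i
  obtain ⟨hta, htb⟩ := ht
  set S : Fin m → ℤ := fun k => ∑ j ∈ Finset.univ.filter (fun j => j < k), t j * a j with hS_def
  set T : Fin m → ℤ := fun k => ∑ j ∈ Finset.univ.filter (fun j => j < k), t j * b j with hT_def
  have hphi : ∀ k, phi m a b t k = b k * S k - a k * T k := by
    intro k
    simp only [phi, LinearMap.coe_mk, AddHom.coe_mk, hS_def, hT_def]
    rw [Finset.mul_sum, Finset.mul_sum, ← Finset.sum_sub_distrib]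
    exact Finset.sum_congr rfl fun j _ => by ring
  have hv : ∀ k, (α • a + β • b + phi m a b t) k
      = α * a k + β * b k + (b k * S k - a k * T k) := by
    intro k
    simp [hphi k, Pi.add_apply]
  by_cases hlt : i.val + 1 < m
  · have hfs : fsucc i = ⟨i.val + 1, hlt⟩ := by
      simp [fsucc, Nat.mod_eq_of_lt hlt]
    have hfilter : Finset.univ.filter (fun j => j < fsucc i)
        = insert i (Finset.univ.filter (fun j => j < i)) := by
      ext j
      simp only [hfs, Finset.mem_filter, Finset.mem_univ, true_and, Finset.mem_insert,
        Fin.lt_def, Fin.ext_iff]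
      omega
    have hSf : S (fsucc i) = t i * a i + S i := by
      simp only [hS_def]
      rw [hfilter, Finset.sum_insert (by simp only [Finset.mem_filter, Finset.mem_univ, true_and]; exact lt_irrefl i)]
    have hTf : T (fsucc i) = t i * b i + T i := by
      simp only [hT_def]
      rw [hfilter, Finset.sum_insert (by simp only [Finset.mem_filter, Finset.mem_univ, true_and]; exact lt_irrefl i)]
    refine mem_Lmod_of hm a b i _ (α - T (fsucc i)) (β + S (fsucc i)) ?_ ?_
    · rw [hv i, hSf, hTf]; ring
    · rw [hv (fsucc i)]; ring
  · have him : i.val + 1 = m := by have := i.isLt; omega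
    have hfs0 : (fsucc i).val = 0 := by simp [fsucc, him]
    have hSf : S (fsucc i) = 0 := by
      simp only [hS_def]
      rw [Finset.filter_false_of_mem, Finset.sum_empty]
      intro j _
      simp only [Fin.lt_def, hfs0]
      omega
    have hTf : T (fsucc i) = 0 := by
      simp only [hT_def]
      rw [Finset.filter_false_of_mem, Finset.sum_empty]
      intro j _
      simp only [Fin.lt_def, hfs0]
      omega
    have hfi : Finset.univ.filter (fun j => j < i) = Finset.univ.erase i := by
      ext j
      have hj := j.isLt
      simp only [Finset.mem_filter, Finset.mem_univ, true_and, Finset.mem_erase,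
        Fin.lt_def, Fin.ext_iff, and_true]
      omega
    have hSi : S i = -(t i * a i) := by
      simp only [hS_def, hfi]
      rw [Finset.sum_erase_eq_sub (Finset.mem_univ i), hta]
      ring
    have hTi : T i = -(t i * b i) := by
      simp only [hT_def, hfi]
      rw [Finset.sum_erase_eq_sub (Finset.mem_univ i), htb]
      ring
    refine mem_Lmod_of hm a b i _ α β ?_ ?_
    · rw [hv i, hSi, hTi]; ring
    · rw [hv (fsucc i), hSf, hTf]; ring

end ToricStmt
end

section
/- Let m ≥ 3 and let λ_1,…,λ_m ∈ ℤ² be such that each λ_i is primitive and det(λ_i,λ_{i+1}) ≠ 0 for i = 1,…,m (indices mod m). Let L = L_1 ∩ ⋯ ∩ L_m and N = ℤ⟨a⟩ + ℤ⟨b⟩. Then φ restricts to a ℤ-module isomorphism from K onto φ(K), and the quotient ℤ-module L/N is isomorphic to K; in particular, L/N is a free ℤ-module of rank m − 2. -/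
namespace ToricStmt

section Aux

variable {m : ℕ} (a b : Fin m → ℤ)

lemma fsucc_val_of_lt {i : Fin m} (h : i.val + 1 < m) : fsucc i = ⟨i.val + 1, h⟩ := by
  simp only [fsucc, Fin.mk.injEq]
  exact Nat.mod_eq_of_lt h

lemma fsucc_last (hm : 0 < m) (hl : m - 1 < m) : fsucc (⟨m - 1, hl⟩ : Fin m) = ⟨0, hm⟩ := by
  simp only [fsucc, Fin.mk.injEq]
  rw [show m - 1 + 1 = m by omega]
  exact Nat.mod_self m

lemma ne_fsucc (hm : 3 ≤ m) (i : Fin m) : i ≠ fsucc i := by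
  intro h
  have h' : i.val = (i.val + 1) % m := congrArg Fin.val h
  have him := i.isLt
  rcases Nat.lt_or_ge (i.val + 1) m with h1 | h1
  · rw [Nat.mod_eq_of_lt h1] at h'; omega
  · have : (i.val + 1) % m = 0 := by rw [show i.val + 1 = m by omega]; exact Nat.mod_self m
    omega

def fpred {m : ℕ} (k : Fin m) : Fin m := ⟨(k.val + (m - 1)) % m, Nat.mod_lt _ k.pos⟩

lemma fsucc_fpred (k : Fin m) : fsucc (fpred k) = k := by
  have h0 : 0 < m := k.pos
  apply Fin.ext
  simp only [fsucc, fpred]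
  rw [Nat.mod_add_mod, show k.val + (m - 1) + 1 = k.val + m by omega, Nat.add_mod_right,
    Nat.mod_eq_of_lt k.isLt]

lemma fpred_zero (h0 : 0 < m) : fpred (⟨0, h0⟩ : Fin m) = ⟨m - 1, by omega⟩ := by
  apply Fin.ext
  simp only [fpred]
  rw [Nat.zero_add]
  exact Nat.mod_eq_of_lt (by omega)

lemma fpred_succ {n : ℕ} (hn : n + 1 < m) : fpred (⟨n + 1, hn⟩ : Fin m) = ⟨n, by omega⟩ := by
  apply Fin.ext
  simp only [fpred]
  rw [show n + 1 + (m - 1) = n + m by omega, Nat.add_mod_right]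
  exact Nat.mod_eq_of_lt (by omega)

lemma fpred_bijective (h0 : 0 < m) : Function.Bijective (fpred : Fin m → Fin m) := by
  have hli : Function.LeftInverse (fsucc : Fin m → Fin m) fpred := fsucc_fpred
  exact Finite.injective_iff_bijective.mp hli.injective

end Aux


section Main

variable {m : ℕ} (a b : Fin m → ℤ)

lemma phi_apply (t : Fin m → ℤ) (i : Fin m) :
    phi m a b t i =
      ∑ j ∈ Finset.univ.filter (fun j => j < i), (a j * b i - a i * b j) * t j := rfl

lemma comb_sum (t : Fin m → ℤ) (S : Finset (Fin m)) (X Y : ℤ) :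
    (∑ j ∈ S, a j * t j) * Y - (∑ j ∈ S, b j * t j) * X
      = ∑ j ∈ S, (a j * Y - X * b j) * t j := by
  rw [Finset.sum_mul, Finset.sum_mul, ← Finset.sum_sub_distrib]
  exact Finset.sum_congr rfl fun j _ => by ring

lemma mem_Lmod_iff (hm : 3 ≤ m) (i : Fin m) (s : Fin m → ℤ) :
    s ∈ Lmod m a b i ↔ ∃ α β : ℤ,
      α * a i + β * b i = s i ∧
      α * a (fsucc i) + β * b (fsucc i) = s (fsucc i) := by
  have hne : i ≠ fsucc i := ne_fsucc hm i
  have hsg1 : (Pi.single i (1:ℤ) : Fin m → ℤ) (fsucc i) = 0 :=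
    Pi.single_eq_of_ne (Ne.symm hne) 1
  have hsg2 : (Pi.single (fsucc i) (1:ℤ) : Fin m → ℤ) i = 0 :=
    Pi.single_eq_of_ne hne 1
  constructor
  · intro hs
    let π : (Fin m → ℤ) →ₗ[ℤ] ℤ × ℤ :=
      { toFun := fun s => (s i, s (fsucc i)),
        map_add' := fun x y => rfl,
        map_smul' := fun c x => rfl }
    have hle : Lmod m a b i ≤ Submodule.comap π
        (Submodule.span ℤ {((a i, a (fsucc i)) : ℤ × ℤ), (b i, b (fsucc i))}) := by
      rw [Lmod]
      apply Submodule.span_le.mpr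
      rintro x (⟨j, ⟨hj1, hj2⟩, rfl⟩ | rfl | rfl)
      · have hval : π (Pi.single j 1) = 0 := by
          have e1 : (Pi.single j (1:ℤ) : Fin m → ℤ) i = 0 :=
            Pi.single_eq_of_ne (Ne.symm hj1) 1
          have e2 : (Pi.single j (1:ℤ) : Fin m → ℤ) (fsucc i) = 0 :=
            Pi.single_eq_of_ne (Ne.symm hj2) 1
          show ((Pi.single j 1 : Fin m → ℤ) i, (Pi.single j 1 : Fin m → ℤ) (fsucc i))
              = (0 : ℤ × ℤ)
          rw [e1, e2]
          rfl
        exact Submodule.mem_comap.mpr (by rw [hval]; exact Submodule.zero_mem _)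
      · have hval : π (a i • Pi.single i 1 + a (fsucc i) • Pi.single (fsucc i) 1)
            = (a i, a (fsucc i)) := by
          show (_, _) = (_, _)
          simp only [Pi.add_apply, Pi.smul_apply, smul_eq_mul, Pi.single_eq_same,
            hsg1, hsg2, Prod.mk.injEq]
          constructor <;> ring
        exact Submodule.mem_comap.mpr
          (by rw [hval]; exact Submodule.subset_span (Set.mem_insert _ _))
      · have hval : π (b i • Pi.single i 1 + b (fsucc i) • Pi.single (fsucc i) 1)
            = (b i, b (fsucc i)) := by
          show (_, _) = (_, _)
          simp only [Pi.add_apply, Pi.smul_apply, smul_eq_mul, Pi.single_eq_same,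
            hsg1, hsg2, Prod.mk.injEq]
          constructor <;> ring
        exact Submodule.mem_comap.mpr
          (by rw [hval]; exact Submodule.subset_span (Set.mem_insert_of_mem _ rfl))
    have hmem := hle hs
    rw [Submodule.mem_comap, Submodule.mem_span_pair] at hmem
    obtain ⟨α, β, h⟩ := hmem
    have h1 := congrArg Prod.fst h
    have h2 := congrArg Prod.snd h
    simp only [Prod.fst_add, Prod.snd_add, Prod.smul_fst, Prod.smul_snd, smul_eq_mul,
      π, LinearMap.coe_mk, AddHom.coe_mk] at h1 h2
    exact ⟨α, β, h1, h2⟩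
  · rintro ⟨α, β, h1, h2⟩
    set v1 := a i • (Pi.single i 1 : Fin m → ℤ) +
      a (fsucc i) • (Pi.single (fsucc i) 1 : Fin m → ℤ) with hv1def
    set v2 := b i • (Pi.single i 1 : Fin m → ℤ) +
      b (fsucc i) • (Pi.single (fsucc i) 1 : Fin m → ℤ) with hv2def
    have hv1 : v1 ∈ Lmod m a b i := Submodule.subset_span (Or.inr (Set.mem_insert _ _))
    have hv2 : v2 ∈ Lmod m a b i :=
      Submodule.subset_span (Or.inr (Set.mem_insert_of_mem _ rfl))
    have hv1i : v1 i = a i := by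
      simp [hv1def, hsg1, hsg2, Pi.single_eq_same]
    have hv1s : v1 (fsucc i) = a (fsucc i) := by
      simp [hv1def, hsg1, hsg2, Pi.single_eq_same]
    have hv2i : v2 i = b i := by
      simp [hv2def, hsg1, hsg2, Pi.single_eq_same]
    have hv2s : v2 (fsucc i) = b (fsucc i) := by
      simp [hv2def, hsg1, hsg2, Pi.single_eq_same]
    have key : s - (α • v1 + β • v2) ∈ Lmod m a b i := by
      set s' := s - (α • v1 + β • v2) with hs'def
      have hrep : s' = ∑ j, Pi.single j (s' j) := (Finset.univ_sum_single s').symm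
      rw [hrep]
      apply Submodule.sum_mem
      intro j _
      by_cases hj1 : j = i
      · have hz : s' j = 0 := by
          rw [hj1, hs'def]
          simp only [Pi.sub_apply, Pi.add_apply, Pi.smul_apply, smul_eq_mul, hv1i, hv2i]
          linarith [h1]
        rw [hz, Pi.single_zero]
        exact Submodule.zero_mem _
      · by_cases hj2 : j = fsucc i
        · have hz : s' j = 0 := by
            rw [hj2, hs'def]
            simp only [Pi.sub_apply, Pi.add_apply, Pi.smul_apply, smul_eq_mul, hv1s, hv2s]
            linarith [h2]
          rw [hz, Pi.single_zero]
          exact Submodule.zero_mem _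
        · have hsm : Pi.single j (s' j) = s' j • (Pi.single j 1 : Fin m → ℤ) := by
            rw [← Pi.single_smul, smul_eq_mul, mul_one]
          rw [hsm]
          exact Submodule.smul_mem _ _
            (Submodule.subset_span (Or.inl ⟨j, ⟨hj1, hj2⟩, rfl⟩))
    have hdecomp : s = (s - (α • v1 + β • v2)) + (α • v1 + β • v2) := by abel
    rw [hdecomp]
    exact Submodule.add_mem _ key
      (Submodule.add_mem _ (Submodule.smul_mem _ _ hv1) (Submodule.smul_mem _ _ hv2))

lemma phi_at_zero (t : Fin m → ℤ) (h0 : 0 < m) : phi m a b t ⟨0, h0⟩ = 0 := by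
  rw [phi_apply]
  have hempty : Finset.univ.filter (fun j => j < (⟨0, h0⟩ : Fin m)) = ∅ := by
    apply Finset.filter_eq_empty_iff.mpr
    intro j _
    simp only [Fin.lt_def]
    omega
  rw [hempty, Finset.sum_empty]

lemma Kmod_mem_iff (t : Fin m → ℤ) :
    t ∈ Kmod m a b ↔ ∑ i, t i * a i = 0 ∧ ∑ i, t i * b i = 0 := Iff.rfl

lemma phi_at_last (hm : 3 ≤ m) {t : Fin m → ℤ} (ht : t ∈ Kmod m a b) :
    phi m a b t ⟨m - 1, by omega⟩ = 0 := by
  obtain ⟨ht1, ht2⟩ := (Kmod_mem_iff a b t).mp ht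
  set L : Fin m := ⟨m - 1, by omega⟩ with hLdef
  have hfilter : Finset.univ.filter (fun j => j < L) = Finset.univ.erase L := by
    ext j
    have hj := j.isLt
    simp only [Finset.mem_filter, Finset.mem_univ, true_and, Finset.mem_erase, and_true,
      Fin.lt_def, ne_eq, Fin.ext_iff, hLdef]
    omega
  have hA : ∑ j ∈ Finset.univ.erase L, a j * t j = -(a L * t L) := by
    have hadd := Finset.add_sum_erase Finset.univ (fun j => a j * t j) (Finset.mem_univ L)
    have hfull : ∑ j, a j * t j = 0 := by
      rw [← ht1]
      exact Finset.sum_congr rfl fun j _ => mul_comm _ _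
    linarith [hadd, hfull]
  have hB : ∑ j ∈ Finset.univ.erase L, b j * t j = -(b L * t L) := by
    have hadd := Finset.add_sum_erase Finset.univ (fun j => b j * t j) (Finset.mem_univ L)
    have hfull : ∑ j, b j * t j = 0 := by
      rw [← ht2]
      exact Finset.sum_congr rfl fun j _ => mul_comm _ _
    linarith [hadd, hfull]
  rw [phi_apply, hfilter, ← comb_sum a b t _ (a L) (b L), hA, hB]
  ring

lemma phi_injOn_K (hm : 3 ≤ m) (hprim : ∀ i, Int.gcd (a i) (b i) = 1)
    (hdet : ∀ i : Fin m, a i * b (fsucc i) - a (fsucc i) * b i ≠ 0)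
    {t : Fin m → ℤ} (ht : t ∈ Kmod m a b) (h0 : phi m a b t = 0) : t = 0 := by
  obtain ⟨ht1, ht2⟩ := (Kmod_mem_iff a b t).mp ht
  have key : ∀ n, n < m - 1 → ∀ hn : n < m, t ⟨n, hn⟩ = 0 := by
    intro n
    induction n using Nat.strong_induction_on with
    | _ n IH =>
      intro hn1 hn
      have hn2 : n + 1 < m := by omega
      have hcoord : phi m a b t ⟨n + 1, hn2⟩ = 0 := by rw [h0]; rfl
      rw [phi_apply] at hcoord
      have hzero : ∀ j : Fin m, j.val < n → t j = 0 := by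
        intro j hj
        have := IH j.val hj (by omega) j.isLt
        rwa [Fin.eta] at this
      have hsingle : ∑ j ∈ Finset.univ.filter (fun j => j < (⟨n + 1, hn2⟩ : Fin m)),
          (a j * b ⟨n + 1, hn2⟩ - a ⟨n + 1, hn2⟩ * b j) * t j
          = (a ⟨n, by omega⟩ * b ⟨n + 1, hn2⟩ - a ⟨n + 1, hn2⟩ * b ⟨n, by omega⟩)
            * t ⟨n, by omega⟩ := by
        apply Finset.sum_eq_single_of_mem
        · simp [Fin.lt_def]
        · intro j hj hjne
          have hjlt : j.val < n + 1 := by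
            have := (Finset.mem_filter.mp hj).2
            simpa [Fin.lt_def] using this
          have hjn : j.val < n := by
            rcases Nat.lt_or_ge j.val n with h | h
            · exact h
            · exfalso; apply hjne; apply Fin.ext; simp; omega
          rw [hzero j hjn, mul_zero]
      rw [hsingle] at hcoord
      have hd := hdet ⟨n, by omega⟩
      rw [fsucc_val_of_lt (show (⟨n, by omega⟩ : Fin m).val + 1 < m from hn2)] at hd
      exact (mul_eq_zero.mp hcoord).resolve_left hd
  have hL : t ⟨m - 1, by omega⟩ = 0 := by
    set L : Fin m := ⟨m - 1, by omega⟩ with hLdef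
    have hothers : ∀ j : Fin m, j ∈ Finset.univ → j ≠ L → t j * a j = 0 := by
      intro j _ hj
      have hjv : j.val < m - 1 := by
        have := j.isLt
        have : j.val ≠ m - 1 := fun h => hj (Fin.ext h)
        omega
      have := key j.val hjv j.isLt
      rw [Fin.eta] at this
      rw [this, zero_mul]
    have hothers' : ∀ j : Fin m, j ∈ Finset.univ → j ≠ L → t j * b j = 0 := by
      intro j _ hj
      have hjv : j.val < m - 1 := by
        have := j.isLt
        have : j.val ≠ m - 1 := fun h => hj (Fin.ext h)
        omega
      have := key j.val hjv j.isLt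
      rw [Fin.eta] at this
      rw [this, zero_mul]
    have ha : t L * a L = 0 := by
      rw [← ht1]
      exact (Finset.sum_eq_single_of_mem L (Finset.mem_univ L) hothers).symm
    have hb : t L * b L = 0 := by
      rw [← ht2]
      exact (Finset.sum_eq_single_of_mem L (Finset.mem_univ L) hothers').symm
    by_contra hne
    have haz : a L = 0 := (mul_eq_zero.mp ha).resolve_left hne
    have hbz : b L = 0 := (mul_eq_zero.mp hb).resolve_left hne
    have := hprim L
    rw [haz, hbz] at this
    simp [Int.gcd] at this
  funext k
  show t k = 0
  rcases Nat.lt_or_ge k.val (m - 1) with hk | hk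
  · have := key k.val hk k.isLt
    rwa [Fin.eta] at this
  · have hkv : k = ⟨m - 1, by omega⟩ := by
      apply Fin.ext
      have := k.isLt
      simp
      omega
    rw [hkv]
    exact hL

lemma phi_mem_Lmod (hm : 3 ≤ m) {t : Fin m → ℤ} (ht : t ∈ Kmod m a b) (i : Fin m) :
    phi m a b t ∈ Lmod m a b i := by
  rw [mem_Lmod_iff a b hm]
  rcases Nat.lt_or_ge (i.val + 1) m with hi | hi
  · have hfs : fsucc i = ⟨i.val + 1, hi⟩ := fsucc_val_of_lt hi
    refine ⟨-(∑ j ∈ Finset.univ.filter (fun j => j < fsucc i), b j * t j),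
            ∑ j ∈ Finset.univ.filter (fun j => j < fsucc i), a j * t j, ?_, ?_⟩
    · rw [phi_apply]
      have hcs := comb_sum a b t (Finset.univ.filter (fun j => j < fsucc i)) (a i) (b i)
      have hsub : ∑ j ∈ Finset.univ.filter (fun j => j < i), (a j * b i - a i * b j) * t j
          = ∑ j ∈ Finset.univ.filter (fun j => j < fsucc i),
              (a j * b i - a i * b j) * t j := by
        apply Finset.sum_subset
        · intro x hx
          simp only [Finset.mem_filter, Finset.mem_univ, true_and, Fin.lt_def] at hx ⊢
          rw [hfs]
          simp only []
          omega
        · intro x hx hnx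
          simp only [Finset.mem_filter, Finset.mem_univ, true_and, Fin.lt_def, hfs] at hx hnx
          have hxi : x = i := by
            apply Fin.ext
            omega
          rw [hxi]
          ring
      rw [← hsub] at hcs
      linarith [hcs]
    · rw [phi_apply, ← comb_sum a b t _ (a (fsucc i)) (b (fsucc i))]
      ring
  · have hieq : i = ⟨m - 1, by omega⟩ := by
      apply Fin.ext
      have := i.isLt
      simp
      omega
    have hfs : fsucc i = ⟨0, by omega⟩ := by
      conv_lhs => rw [hieq]
      exact fsucc_last (by omega) (by omega)
    refine ⟨0, 0, ?_, ?_⟩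
    · rw [hieq, phi_at_last a b hm ht]
      ring
    · rw [hfs, phi_at_zero]
      ring

lemma a_mem_Lmod (hm : 3 ≤ m) (i : Fin m) : a ∈ Lmod m a b i :=
  (mem_Lmod_iff a b hm i a).mpr ⟨1, 0, by ring, by ring⟩

lemma b_mem_Lmod (hm : 3 ≤ m) (i : Fin m) : b ∈ Lmod m a b i :=
  (mem_Lmod_iff a b hm i b).mpr ⟨0, 1, by ring, by ring⟩

lemma exists_c {x y A B : ℤ} (hg : Int.gcd A B = 1) (h : x * A + y * B = 0) :
    ∃ c, x = c * B ∧ y = -(c * A) := by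
  obtain ⟨u, v, huv⟩ := Int.isCoprime_iff_gcd_eq_one.mpr hg
  refine ⟨x * v - y * u, ?_, ?_⟩
  · linear_combination (-x) * huv + u * h
  · linear_combination (-y) * huv + v * h

lemma indep_phi (hm : 3 ≤ m) (hprim : ∀ i, Int.gcd (a i) (b i) = 1)
    (hdet : ∀ i : Fin m, a i * b (fsucc i) - a (fsucc i) * b i ≠ 0)
    {t : Fin m → ℤ} {α β : ℤ} (ht : t ∈ Kmod m a b)
    (h : phi m a b t = α • a + β • b) : t = 0 := by
  set z : Fin m := ⟨0, by omega⟩ with hzdef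
  set L : Fin m := ⟨m - 1, by omega⟩ with hLdef
  have h0'' : α * a z + β * b z = 0 := by
    have := congrFun h z
    rw [phi_at_zero] at this
    simp only [Pi.add_apply, Pi.smul_apply, smul_eq_mul] at this
    linarith
  have hL'' : α * a L + β * b L = 0 := by
    have := congrFun h L
    rw [phi_at_last a b hm ht] at this
    simp only [Pi.add_apply, Pi.smul_apply, smul_eq_mul] at this
    linarith
  have hd : a L * b z - a z * b L ≠ 0 := by
    have := hdet L
    rwa [fsucc_last (by omega) (by omega)] at this
  have hα : α = 0 := by
    have hcalc : α * (a L * b z - a z * b L) = 0 := by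
      linear_combination b z * hL'' - b L * h0''
    exact (mul_eq_zero.mp hcalc).resolve_right hd
  have hβ : β = 0 := by
    have hcalc : β * (a L * b z - a z * b L) = 0 := by
      linear_combination a L * h0'' - a z * hL''
    exact (mul_eq_zero.mp hcalc).resolve_right hd
  rw [hα, hβ] at h
  simp only [zero_smul, add_zero] at h
  exact phi_injOn_K a b hm hprim hdet ht h

lemma decomp (hm : 3 ≤ m) (hprim : ∀ i, Int.gcd (a i) (b i) = 1)
    {s : Fin m → ℤ} (hs : s ∈ ⨅ i, Lmod m a b i) :
    ∃ t ∈ Kmod m a b, ∃ α β : ℤ, s = phi m a b t + α • a + β • b := by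
  have h0 : 0 < m := by omega
  have hsl : ∀ i : Fin m, ∃ α β : ℤ,
      α * a i + β * b i = s i ∧ α * a (fsucc i) + β * b (fsucc i) = s (fsucc i) :=
    fun i => (mem_Lmod_iff a b hm i s).mp ((Submodule.mem_iInf _).mp hs i)
  choose A B hAB1 hAB2 using hsl
  have hrel : ∀ k : Fin m,
      (A (fpred k) - A k) * a k + (B (fpred k) - B k) * b k = 0 := by
    intro k
    have h1 := hAB2 (fpred k)
    rw [fsucc_fpred] at h1
    have h2 := hAB1 k
    linear_combination h1 - h2
  have hc : ∀ k, ∃ c, A (fpred k) - A k = c * b k ∧ B (fpred k) - B k = -(c * a k) :=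
    fun k => exists_c (hprim k) (hrel k)
  choose t ht1 ht2 using hc
  have hbij : Function.Bijective (fpred : Fin m → Fin m) := fpred_bijective h0
  have hsumB : ∑ k, B (fpred k) = ∑ k, B k :=
    Fintype.sum_bijective fpred hbij (fun k => B (fpred k)) B (fun k => rfl)
  have hsumA : ∑ k, A (fpred k) = ∑ k, A k :=
    Fintype.sum_bijective fpred hbij (fun k => A (fpred k)) A (fun k => rfl)
  have htK : t ∈ Kmod m a b := by
    rw [Kmod_mem_iff]
    constructor
    · have heq : ∀ k : Fin m, t k * a k = B k - B (fpred k) := fun k => by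
        linarith [ht2 k]
      calc ∑ k, t k * a k = ∑ k, (B k - B (fpred k)) :=
            Finset.sum_congr rfl fun k _ => heq k
        _ = ∑ k, B k - ∑ k, B (fpred k) := Finset.sum_sub_distrib _ _
        _ = 0 := by rw [hsumB]; ring
    · have heq : ∀ k : Fin m, t k * b k = A (fpred k) - A k := fun k => by
        linarith [ht1 k]
      calc ∑ k, t k * b k = ∑ k, (A (fpred k) - A k) :=
            Finset.sum_congr rfl fun k _ => heq k
        _ = ∑ k, A (fpred k) - ∑ k, A k := Finset.sum_sub_distrib _ _
        _ = 0 := by rw [hsumA]; ring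
  set Lst : Fin m := ⟨m - 1, by omega⟩ with hLstdef
  refine ⟨t, htK, A Lst, B Lst, ?_⟩
  have SA : ∀ n, ∀ hn : n < m,
      ∑ j ∈ Finset.univ.filter (fun j => j < (⟨n, hn⟩ : Fin m)), a j * t j
        = B (fpred ⟨n, hn⟩) - B Lst := by
    intro n
    induction n with
    | zero =>
      intro hn
      have hempty : Finset.univ.filter (fun j => j < (⟨0, hn⟩ : Fin m)) = ∅ := by
        apply Finset.filter_eq_empty_iff.mpr
        intro j _
        simp only [Fin.lt_def]
        omega
      rw [hempty, Finset.sum_empty, fpred_zero]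
      ring
    | succ n IHn =>
      intro hn
      have hn' : n < m := by omega
      have hins : Finset.univ.filter (fun j => j < (⟨n + 1, hn⟩ : Fin m))
          = insert (⟨n, hn'⟩ : Fin m)
              (Finset.univ.filter (fun j => j < (⟨n, hn'⟩ : Fin m))) := by
        ext j
        simp only [Finset.mem_filter, Finset.mem_univ, true_and, Finset.mem_insert,
          Fin.lt_def, Fin.ext_iff]
        omega
      rw [hins, Finset.sum_insert (by simp [Fin.lt_def]), IHn hn', fpred_succ hn]
      have := ht2 (⟨n, hn'⟩ : Fin m)
      have hfp : fpred (⟨n + 1, hn⟩ : Fin m) = (⟨n, hn'⟩ : Fin m) := fpred_succ hn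
      linarith [this]
  have SB : ∀ n, ∀ hn : n < m,
      ∑ j ∈ Finset.univ.filter (fun j => j < (⟨n, hn⟩ : Fin m)), b j * t j
        = A Lst - A (fpred ⟨n, hn⟩) := by
    intro n
    induction n with
    | zero =>
      intro hn
      have hempty : Finset.univ.filter (fun j => j < (⟨0, hn⟩ : Fin m)) = ∅ := by
        apply Finset.filter_eq_empty_iff.mpr
        intro j _
        simp only [Fin.lt_def]
        omega
      rw [hempty, Finset.sum_empty, fpred_zero]
      ring
    | succ n IHn =>
      intro hn
      have hn' : n < m := by omega
      have hins : Finset.univ.filter (fun j => j < (⟨n + 1, hn⟩ : Fin m))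
          = insert (⟨n, hn'⟩ : Fin m)
              (Finset.univ.filter (fun j => j < (⟨n, hn'⟩ : Fin m))) := by
        ext j
        simp only [Finset.mem_filter, Finset.mem_univ, true_and, Finset.mem_insert,
          Fin.lt_def, Fin.ext_iff]
        omega
      rw [hins, Finset.sum_insert (by simp [Fin.lt_def]), IHn hn', fpred_succ hn]
      have := ht1 (⟨n, hn'⟩ : Fin m)
      linarith [this]
  funext k
  have SAk := SA k.val k.isLt
  have SBk := SB k.val k.isLt
  rw [Fin.eta] at SAk SBk
  have hk := hAB2 (fpred k)
  rw [fsucc_fpred] at hk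
  have hphi : phi m a b t k
      = b k * (B (fpred k) - B Lst) - a k * (A Lst - A (fpred k)) := by
    rw [phi_apply, ← comb_sum a b t _ (a k) (b k), SAk, SBk]
    ring
  show s k = (phi m a b t + A Lst • a + B Lst • b) k
  simp only [Pi.add_apply, Pi.smul_apply, smul_eq_mul]
  rw [hphi]
  linarith [hk]

/-- The relations map `t ↦ (∑ tᵢaᵢ, ∑ tᵢbᵢ)` whose kernel is `K`. -/
def fab (m : ℕ) (a b : Fin m → ℤ) : (Fin m → ℤ) →ₗ[ℤ] ℤ × ℤ where
  toFun t := (∑ i, t i * a i, ∑ i, t i * b i)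
  map_add' x y := by
    refine Prod.ext ?_ ?_ <;>
      simp [Pi.add_apply, add_mul, Finset.sum_add_distrib]
  map_smul' c x := by
    refine Prod.ext ?_ ?_ <;>
      simp [Pi.smul_apply, smul_eq_mul, mul_assoc, ← Finset.mul_sum]

lemma Kmod_eq_ker : Kmod m a b = LinearMap.ker (fab m a b) := by
  ext t
  rw [Kmod_mem_iff, LinearMap.mem_ker]
  constructor
  · rintro ⟨h1, h2⟩
    exact Prod.ext h1 h2
  · intro h
    exact ⟨congrArg Prod.fst h, congrArg Prod.snd h⟩

lemma fab_single (i0 : Fin m) : fab m a b (Pi.single i0 1) = (a i0, b i0) := by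
  have h1 : ∀ c : Fin m → ℤ, (∑ j, (Pi.single i0 1 : Fin m → ℤ) j * c j) = c i0 := by
    intro c
    rw [Finset.sum_eq_single i0]
    · rw [Pi.single_eq_same, one_mul]
    · intro j _ hj
      rw [Pi.single_eq_of_ne hj, zero_mul]
    · intro h
      exact absurd (Finset.mem_univ i0) h
  exact Prod.ext (h1 a) (h1 b)

lemma finrank_Kmod (hm : 3 ≤ m)
    (hdet : ∀ i : Fin m, a i * b (fsucc i) - a (fsucc i) * b i ≠ 0) :
    Module.finrank ℤ ↥(Kmod m a b) = m - 2 := by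
  have h01 : ((⟨0, by omega⟩ : Fin m) : Fin m).val + 1 < m := by simp; omega
  have hfs01 : fsucc (⟨0, by omega⟩ : Fin m) = ⟨1, by omega⟩ := fsucc_val_of_lt h01
  have hd : a ⟨0, by omega⟩ * b ⟨1, by omega⟩ - a ⟨1, by omega⟩ * b ⟨0, by omega⟩ ≠ 0 := by
    have := hdet ⟨0, by omega⟩
    rwa [hfs01] at this
  set u : ℤ × ℤ := (a ⟨0, by omega⟩, b ⟨0, by omega⟩) with hu
  set v : ℤ × ℤ := (a ⟨1, by omega⟩, b ⟨1, by omega⟩) with hv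
  have hli : LinearIndependent ℤ ![u, v] := by
    rw [LinearIndependent.pair_iff]
    intro s t hst
    have h1 := congrArg Prod.fst hst
    have h2 := congrArg Prod.snd hst
    simp only [Prod.fst_add, Prod.snd_add, Prod.smul_fst, Prod.smul_snd, smul_eq_mul,
      hu, hv, Prod.fst_zero, Prod.snd_zero] at h1 h2
    constructor
    · have : s * (a ⟨0, by omega⟩ * b ⟨1, by omega⟩ - a ⟨1, by omega⟩ * b ⟨0, by omega⟩)
          = 0 := by linear_combination b ⟨1, by omega⟩ * h1 - a ⟨1, by omega⟩ * h2
      exact (mul_eq_zero.mp this).resolve_right hd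
    · have : t * (a ⟨0, by omega⟩ * b ⟨1, by omega⟩ - a ⟨1, by omega⟩ * b ⟨0, by omega⟩)
          = 0 := by linear_combination a ⟨0, by omega⟩ * h2 - b ⟨0, by omega⟩ * h1
      exact (mul_eq_zero.mp this).resolve_right hd
  have hspan_le : Submodule.span ℤ (Set.range ![u, v]) ≤ LinearMap.range (fab m a b) := by
    rw [Submodule.span_le]
    rintro x ⟨j, rfl⟩
    fin_cases j
    · exact ⟨Pi.single ⟨0, by omega⟩ 1, fab_single a b _⟩
    · exact ⟨Pi.single ⟨1, by omega⟩ 1, fab_single a b _⟩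
  have hfr2 : Module.finrank ℤ (ℤ × ℤ) = 2 := by
    rw [Module.finrank_prod, Module.finrank_self]
  have hrange : Module.finrank ℤ ↥(LinearMap.range (fab m a b)) = 2 := by
    have hle : Module.finrank ℤ ↥(LinearMap.range (fab m a b)) ≤ 2 := by
      rw [← hfr2]
      exact Submodule.finrank_le _
    have hge : 2 ≤ Module.finrank ℤ ↥(LinearMap.range (fab m a b)) := by
      have hmono := Submodule.finrank_mono hspan_le
      rw [finrank_span_eq_card hli] at hmono
      simpa using hmono
    omega
  have hrn := LinearMap.rank_range_add_rank_ker (fab m a b)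
  rw [rank_fin_fun] at hrn
  rw [← Module.finrank_eq_rank ℤ ↥(LinearMap.range (fab m a b)),
    ← Module.finrank_eq_rank ℤ ↥(LinearMap.ker (fab m a b)), hrange] at hrn
  have hnat : 2 + Module.finrank ℤ ↥(LinearMap.ker (fab m a b)) = m := by
    exact_mod_cast hrn
  rw [Kmod_eq_ker]
  omega

end Main

/-- `φ` restricts to a `ℤ`-module isomorphism from `K` onto `φ(K)`,
and `L/N ≅ K` where `L = L_1 ∩ ⋯ ∩ L_m` and `N = ℤ⟨a⟩ + ℤ⟨b⟩`; in particular `L/N`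
is a free `ℤ`-module of rank `m - 2`. -/
theorem stmt14 (m : ℕ) (hm : 3 ≤ m) (a b : Fin m → ℤ)
    (hprim : ∀ i, Int.gcd (a i) (b i) = 1)
    (hdet : ∀ i : Fin m, a i * b (fsucc i) - a (fsucc i) * b i ≠ 0) :
    (∃ e : ↥(Kmod m a b) ≃ₗ[ℤ] ↥((Kmod m a b).map (phi m a b)),
      ∀ t : ↥(Kmod m a b), (e t : Fin m → ℤ) = phi m a b (t : Fin m → ℤ)) ∧
    Nonempty
      ((↥(⨅ i, Lmod m a b i) ⧸
          Submodule.comap (⨅ i, Lmod m a b i).subtype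
            (Submodule.span ℤ {a} ⊔ Submodule.span ℤ {b})) ≃ₗ[ℤ] ↥(Kmod m a b)) ∧
    Module.Free ℤ
      (↥(⨅ i, Lmod m a b i) ⧸
        Submodule.comap (⨅ i, Lmod m a b i).subtype
          (Submodule.span ℤ {a} ⊔ Submodule.span ℤ {b})) ∧
    Module.finrank ℤ
      (↥(⨅ i, Lmod m a b i) ⧸
        Submodule.comap (⨅ i, Lmod m a b i).subtype
          (Submodule.span ℤ {a} ⊔ Submodule.span ℤ {b})) = m - 2 := by
  have h0m : 0 < m := by omega
  constructor
  · -- part 1 : φ restricts to an isomorphism K ≃ φ(K)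
    have hmaps : ∀ x ∈ Kmod m a b, phi m a b x ∈ (Kmod m a b).map (phi m a b) :=
      fun x hx => Submodule.mem_map_of_mem hx
    set g := (phi m a b).restrict hmaps with hg
    have hgbij : Function.Bijective g := by
      constructor
      · intro x y hxy
        apply Subtype.ext
        have hval : phi m a b (x : Fin m → ℤ) = phi m a b (y : Fin m → ℤ) :=
          congrArg Subtype.val hxy
        have hsub : phi m a b ((x : Fin m → ℤ) - (y : Fin m → ℤ)) = 0 := by
          rw [map_sub, hval, sub_self]
        have := phi_injOn_K a b hm hprim hdet (Submodule.sub_mem _ x.2 y.2) hsub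
        exact sub_eq_zero.mp this
      · rintro ⟨y, hy⟩
        obtain ⟨x, hx, rfl⟩ := hy
        exact ⟨⟨x, hx⟩, rfl⟩
    exact ⟨LinearEquiv.ofBijective g hgbij, fun t => rfl⟩
  · -- parts 2–4
    set L := ⨅ i, Lmod m a b i with hLdef
    set N' := Submodule.comap L.subtype (Submodule.span ℤ {a} ⊔ Submodule.span ℤ {b})
      with hN'def
    have hKL : ∀ x ∈ Kmod m a b, phi m a b x ∈ L :=
      fun x hx => (Submodule.mem_iInf _).mpr (phi_mem_Lmod a b hm hx)
    set g2 : ↥(Kmod m a b) →ₗ[ℤ] ↥L ⧸ N' := N'.mkQ.comp ((phi m a b).restrict hKL)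
      with hg2def
    have hg2val : ∀ x : ↥(Kmod m a b),
        g2 x = Submodule.Quotient.mk ((phi m a b).restrict hKL x) := fun x => rfl
    have hg2 : Function.Bijective g2 := by
      constructor
      · intro x y hxy
        apply Subtype.ext
        have hsub0 : g2 (x - y) = 0 := by rw [map_sub, hxy, sub_self]
        rw [hg2val, Submodule.Quotient.mk_eq_zero] at hsub0
        have hmem : phi m a b ((x : Fin m → ℤ) - (y : Fin m → ℤ))
            ∈ Submodule.span ℤ {a} ⊔ Submodule.span ℤ {b} := hsub0
        obtain ⟨p, hp, q, hq, hpq⟩ := Submodule.mem_sup.mp hmem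
        obtain ⟨α, rfl⟩ := Submodule.mem_span_singleton.mp hp
        obtain ⟨β, rfl⟩ := Submodule.mem_span_singleton.mp hq
        have := indep_phi a b hm hprim hdet
          (Submodule.sub_mem _ x.2 y.2) hpq.symm
        exact sub_eq_zero.mp this
      · intro q
        obtain ⟨⟨s, hsL⟩, rfl⟩ := Submodule.mkQ_surjective N' q
        have hsL' : s ∈ ⨅ i, Lmod m a b i := hsL
        obtain ⟨t, htK, α, β, hdec⟩ := decomp a b hm hprim hsL'
        refine ⟨⟨t, htK⟩, ?_⟩
        rw [hg2val]
        show Submodule.Quotient.mk _ = Submodule.Quotient.mk _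
        rw [Submodule.Quotient.eq]
        show (((phi m a b).restrict hKL ⟨t, htK⟩ : ↥L) - ⟨s, hsL⟩ : ↥L) ∈ N'
        rw [hN'def, Submodule.mem_comap]
        have hval : L.subtype (((phi m a b).restrict hKL ⟨t, htK⟩ : ↥L) - ⟨s, hsL⟩)
            = phi m a b t - s := rfl
        rw [hval, hdec]
        have hsimp : phi m a b t - (phi m a b t + α • a + β • b)
            = (-α) • a + (-β) • b := by
          simp only [neg_smul]
          abel
        rw [hsimp]
        exact Submodule.add_mem _
          (Submodule.mem_sup_left
            (Submodule.smul_mem _ _ (Submodule.mem_span_singleton_self a)))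
          (Submodule.mem_sup_right
            (Submodule.smul_mem _ _ (Submodule.mem_span_singleton_self b)))
    set E : (↥L ⧸ N') ≃ₗ[ℤ] ↥(Kmod m a b) := (LinearEquiv.ofBijective g2 hg2).symm
      with hEdef
    refine ⟨⟨E⟩, ?_, ?_⟩
    · exact Module.Free.of_equiv E.symm
    · rw [LinearEquiv.finrank_eq E]
      exact finrank_Kmod a b hm hdet

end ToricStmt
end
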